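/- Let I = {p₁, p₂} and O = {q}. Let L₁ = {w ∈ (2^(I∪O))^ω : q ∈ w₀ if and only if p₁ ∈ w₀} and L₂ = {w ∈ (2^(I∪O))^ω : for all j ≥ 0, p₂ ∈ w_j}, and let L_φ = L₁ ∪ L₂. Then for every (I/O)-transducer T: T realizes L_φ if and only if T realizes L₁. -/

import Mathlib

open Set

/-- Infinite words over alphabet `A`. -/
abbrev Word (A : Type) := ℕ → A

/-- A transducer with input alphabet `Ain` and output alphabet `Aout`. -/
structure Transd (Ain Aout : Type) where
  S : Type
  fintype_S : Fintype S
  s0 : S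
  η : S → Ain → S
  τ : S → Aout

def Transd.stateAt {Ain Aout : Type} (T : Transd Ain Aout) (w : Word Ain) : ℕ → T.S
  | 0 => T.η T.s0 (w 0)
  | n + 1 => T.η (T.stateAt w n) (w (n + 1))

def Transd.out {Ain Aout : Type} (T : Transd Ain Aout) (w : Word Ain) (j : ℕ) : Aout :=
  T.τ (T.stateAt w j)

/-- The computation of an (I/O)-transducer on an input word. -/
def ioComp {I O : Type} (T : Transd (Set I) (Set O)) (wI : Word (Set I)) :
    Word (Set (I ⊕ O)) :=
  fun j => Sum.inl '' wI j ∪ Sum.inr '' T.out wI j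

/-- `T` realizes the language `L`. -/
def Transd.realizes {I O : Type} (T : Transd (Set I) (Set O))
    (L : Set (Word (Set (I ⊕ O)))) : Prop :=
  ∀ wI, ioComp T wI ∈ L

/-- `I = {p₁, p₂}` (modeled as `Fin 2`, with `p₁ = 0` and `p₂ = 1`) and `O = {q}`
(modeled as `Unit`).  `L₁` says `q ∈ w₀ ↔ p₁ ∈ w₀`. -/
def L1 : Set (Word (Set (Fin 2 ⊕ Unit))) :=
  {w | Sum.inr () ∈ w 0 ↔ Sum.inl 0 ∈ w 0}

/-- `L₂` says `p₂` always holds. -/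
def L2 : Set (Word (Set (Fin 2 ⊕ Unit))) :=
  {w | ∀ j, Sum.inl 1 ∈ w j}

/-- `L₁ ∪ L₂` is open-equivalent to `L₁`: a transducer realizes the
union iff it realizes `L₁`. -/
theorem open_equivalence :
    ∀ T : Transd (Set (Fin 2)) (Set Unit),
      T.realizes (L1 ∪ L2) ↔ T.realizes L1 := by
  intro T
  constructor
  · intro h wI
    -- modify the input at position 1 to kill membership in L2
    set wI' : Word (Set (Fin 2)) := fun n => if n = 0 then wI 0 else ∅ with hwI'
    have h0 : ioComp T wI' 0 = ioComp T wI 0 := by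
      simp [ioComp, Transd.out, Transd.stateAt, hwI']
    rcases h wI' with h1 | h2
    · have : ioComp T wI ∈ L1 := by
        simpa [L1, h0] using h1
      exact this
    · exfalso
      have := h2 1
      simp only [ioComp, hwI'] at this
      rcases this with ⟨x, hx, hx2⟩ | ⟨x, hx, hx2⟩
      · simp at hx
      · cases hx2
  · intro h wI
    exact Or.inl (h wI)
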